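/- Let V_h be the space of piecewise polynomials of degree ≤ k on a partition 0 = x_{1/2} < x_{3/2} < ... < x_{N+1/2} = 1 (with no continuity across interfaces), θ ∈ [0,1] with θ ≠ 1/2, and define the generalized trace ŵ_{j+1/2} = θ w(x_{j+1/2}⁻) + (1−θ) w(x_{j+1/2}⁺) (indices periodic mod N). For each continuous piecewise-H¹ function u, there exists a unique Pu ∈ V_h such that ∫_{I_j} (Pu − u)·w dx = 0 for all polynomials w of degree ≤ k−1 on each cell I_j, and (Pu)^_{j+1/2} = û_{j+1/2} for every j. -/

import Mathlib

open Polynomial intervalIntegral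

section GGRAux

open MeasureTheory

/-- A continuous nonnegative function with zero integral vanishes on the open interval. -/
lemma ggr_int_nonneg_eq_zero {a b : ℝ} (hab : a < b) {f : ℝ → ℝ} (hf : Continuous f)
    (h0 : ∀ y ∈ Set.Icc a b, 0 ≤ f y) (hint : ∫ y in a..b, f y = 0) :
    ∀ y ∈ Set.Ioo a b, f y = 0 := by
  intro y hy
  by_contra hne
  have hpos : 0 < f y := lt_of_le_of_ne (h0 y ⟨hy.1.le, hy.2.le⟩) (Ne.symm hne)
  set V : Set ℝ := f ⁻¹' Set.Ioi 0 ∩ Set.Ioo a b with hV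
  have hVopen : IsOpen V := (isOpen_Ioi.preimage hf).inter isOpen_Ioo
  have hVne : V.Nonempty := ⟨y, hpos, hy⟩
  have hfi : IntervalIntegrable f volume a b := hf.intervalIntegrable a b
  have hae : 0 ≤ᵐ[volume.restrict (Set.uIoc a b)] f := by
    refine (MeasureTheory.ae_restrict_iff' measurableSet_uIoc).2 (Filter.Eventually.of_forall ?_)
    intro z hz
    rw [Set.uIoc_of_le hab.le] at hz
    exact h0 z ⟨hz.1.le, hz.2⟩
  have := (intervalIntegral.integral_pos_iff_support_of_nonneg_ae' hae hfi).2
    ⟨hab, ?_⟩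
  · exact absurd hint (ne_of_gt this)
  · refine lt_of_lt_of_le (hVopen.measure_pos volume hVne) (measure_mono ?_)
    intro z hz
    exact ⟨ne_of_gt hz.1, hz.2.1, hz.2.2.le⟩

/-- Vanishing moments against monomials implies vanishing against all polynomials
of degree `< k`. -/
lemma ggr_momspan {a b : ℝ} {k : ℕ} {f : ℝ → ℝ} (hf : Continuous f)
    (h : ∀ i, i < k → ∫ y in a..b, f y * y ^ i = 0) :
    ∀ w : Polynomial ℝ, w.degree < (k : ℕ) → ∫ y in a..b, f y * w.eval y = 0 := by
  intro w hw
  rcases eq_or_ne w 0 with rfl | hw0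
  · simp
  have hnd : w.natDegree < k := by
    have := Polynomial.degree_eq_natDegree hw0 ▸ hw
    exact_mod_cast this
  have key : ∀ y : ℝ, f y * w.eval y
      = ∑ i ∈ Finset.range k, w.coeff i * (f y * y ^ i) := by
    intro y
    rw [Polynomial.eval_eq_sum_range' hnd y, Finset.mul_sum]
    exact Finset.sum_congr rfl fun i _ => by ring
  calc (∫ y in a..b, f y * w.eval y)
      = ∫ y in a..b, ∑ i ∈ Finset.range k, w.coeff i * (f y * y ^ i) := by
        simp_rw [key]
    _ = ∑ i ∈ Finset.range k, ∫ y in a..b, w.coeff i * (f y * y ^ i) := by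
        refine intervalIntegral.integral_finset_sum fun i _ => ?_
        exact (Continuous.intervalIntegrable (by continuity) a b)
    _ = ∑ i ∈ Finset.range k, w.coeff i * ∫ y in a..b, f y * y ^ i := by
        simp_rw [intervalIntegral.integral_const_mul]
    _ = 0 := by
        refine Finset.sum_eq_zero fun i hi => ?_
        rw [h i (Finset.mem_range.mp hi), mul_zero]

/-- A polynomial of degree `< k` orthogonal to all polynomials of degree `< k` is zero. -/
lemma ggr_deglt_zero {a b : ℝ} (hab : a < b) {k : ℕ} {q : Polynomial ℝ}
    (hd : q.degree < (k : ℕ))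
    (h : ∀ w : Polynomial ℝ, w.degree < (k : ℕ) → ∫ y in a..b, q.eval y * w.eval y = 0) :
    q = 0 := by
  have hsq := h q hd
  have hzero : ∀ y ∈ Set.Ioo a b, q.eval y * q.eval y = 0 := by
    refine ggr_int_nonneg_eq_zero hab (q.continuous.mul q.continuous)
      (fun y _ => mul_self_nonneg _) hsq
  refine Polynomial.eq_zero_of_infinite_isRoot q ?_
  refine (Set.Ioo_infinite hab).mono ?_
  intro y hy
  exact mul_self_eq_zero.mp (hzero y hy)

/-- A polynomial of degree `≤ k` orthogonal to degree `< k`, vanishing at `b`, is zero. -/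
lemma ggr_ker_b {a b : ℝ} (hab : a < b) {k : ℕ} {q : Polynomial ℝ}
    (hd : q.degree ≤ (k : ℕ))
    (h : ∀ w : Polynomial ℝ, w.degree < (k : ℕ) → ∫ y in a..b, q.eval y * w.eval y = 0)
    (hb : q.eval b = 0) : q = 0 := by
  rcases eq_or_ne q 0 with rfl | hq0
  · rfl
  exfalso
  obtain ⟨r, hr⟩ := (Polynomial.dvd_iff_isRoot.2 hb : (X - C b) ∣ q)
  have hr0 : r ≠ 0 := fun h0 => hq0 (by simp [hr, h0])
  have hdegr : r.degree < (k : ℕ) := by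
    have h1 : q.degree = 1 + r.degree := by
      rw [hr, Polynomial.degree_mul, Polynomial.degree_X_sub_C]
    rw [Polynomial.degree_eq_natDegree hr0]
    rw [h1, Polynomial.degree_eq_natDegree hr0] at hd
    have : (1 + r.natDegree : ℕ) ≤ k := by exact_mod_cast hd
    exact_mod_cast Nat.lt_of_succ_le (by omega)
  have hint := h r hdegr
  have hint' : ∫ y in a..b, (b - y) * (r.eval y * r.eval y) = 0 := by
    have : (fun y => (b - y) * (r.eval y * r.eval y))
        = fun y => -(q.eval y * r.eval y) := by
      funext y; rw [hr]; simp only [Polynomial.eval_mul, Polynomial.eval_sub,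
        Polynomial.eval_X, Polynomial.eval_C]; ring
    rw [this, intervalIntegral.integral_neg, hint, neg_zero]
  have hzero : ∀ y ∈ Set.Ioo a b, (b - y) * (r.eval y * r.eval y) = 0 := by
    refine ggr_int_nonneg_eq_zero hab
      (((continuous_const.sub continuous_id).mul (r.continuous.mul r.continuous)))
      (fun y hy => mul_nonneg (by linarith [hy.2]) (mul_self_nonneg _)) hint'
  have : r = 0 := by
    refine Polynomial.eq_zero_of_infinite_isRoot r ?_
    refine (Set.Ioo_infinite hab).mono ?_
    intro y hy
    have h2 := hzero y hy
    have hby : b - y ≠ 0 := sub_ne_zero.mpr (ne_of_gt hy.2)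
    exact mul_self_eq_zero.mp ((mul_eq_zero.mp h2).resolve_left hby)
  exact hr0 this

/-- Endpoint-value relation for elements of the one-dimensional residual space. -/
lemma ggr_ker_refl {a b : ℝ} (hab : a < b) {k : ℕ} {q : Polynomial ℝ}
    (hd : q.degree ≤ (k : ℕ))
    (h : ∀ w : Polynomial ℝ, w.degree < (k : ℕ) → ∫ y in a..b, q.eval y * w.eval y = 0) :
    q.eval a = (-1 : ℝ) ^ k * q.eval b := by
  rcases eq_or_ne q 0 with rfl | hq0
  · simp
  set L : Polynomial ℝ := C (a + b) - X with hL
  have hLnd : L.natDegree = 1 := by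
    rw [hL]
    compute_degree!
  have hLlc : L.leadingCoeff = -1 := by
    have : L = -(X - C (a + b)) := by ring
    rw [this, Polynomial.leadingCoeff_neg, Polynomial.leadingCoeff_X_sub_C]
  have hLeval : ∀ y : ℝ, L.eval y = a + b - y := by intro y; simp [hL]
  set qt : Polynomial ℝ := q.comp L with hqt
  have hqtev : ∀ y : ℝ, qt.eval y = q.eval (a + b - y) := by
    intro y; rw [hqt, Polynomial.eval_comp, hLeval]
  have hqnd : q.natDegree ≤ k := Polynomial.natDegree_le_iff_degree_le.mpr hd
  have hqtnd : qt.natDegree = q.natDegree := by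
    rw [hqt, Polynomial.natDegree_comp, hLnd, mul_one]
  have hdt : qt.degree ≤ (k : ℕ) :=
    le_trans (Polynomial.degree_le_natDegree) (by exact_mod_cast hqtnd ▸ hqnd)
  -- qt satisfies the same orthogonality
  have ht : ∀ w : Polynomial ℝ, w.degree < (k : ℕ) → ∫ y in a..b, qt.eval y * w.eval y = 0 := by
    intro w hw
    have hwc : (w.comp L).degree < (k : ℕ) := by
      rcases eq_or_ne w 0 with rfl | hw0
      · simpa using hw
      have h1 : (w.comp L).natDegree = w.natDegree := by
        rw [Polynomial.natDegree_comp, hLnd, mul_one]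
      calc (w.comp L).degree ≤ ((w.comp L).natDegree : WithBot ℕ) := Polynomial.degree_le_natDegree
        _ = (w.natDegree : WithBot ℕ) := by exact_mod_cast h1
        _ = w.degree := (Polynomial.degree_eq_natDegree hw0).symm
        _ < (k : ℕ) := hw
    have key : (∫ y in a..b, qt.eval y * w.eval y)
        = ∫ t in a..b, q.eval t * (w.comp L).eval t := by
      have h2 : ∀ y : ℝ, qt.eval y * w.eval y
          = (fun t => q.eval t * (w.comp L).eval t) (a + b - y) := by
        intro y
        simp only [hqtev, Polynomial.eval_comp, hLeval]
        ring_nf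
      calc (∫ y in a..b, qt.eval y * w.eval y)
          = ∫ y in a..b, (fun t => q.eval t * (w.comp L).eval t) ((a+b) - y) := by
            simp_rw [h2]
        _ = ∫ t in (a+b)-b..(a+b)-a, q.eval t * (w.comp L).eval t :=
            intervalIntegral.integral_comp_sub_left (fun t => q.eval t * (w.comp L).eval t) (a+b)
        _ = ∫ t in a..b, q.eval t * (w.comp L).eval t := by norm_num
    rw [key]
    exact h (w.comp L) hwc
  -- q does not vanish at b, and has degree exactly k
  have hb : q.eval b ≠ 0 := fun h0 => hq0 (ggr_ker_b hab hd h h0)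
  have hdeg : q.natDegree = k := by
    by_contra hne
    have : q.degree < (k : ℕ) := by
      rw [Polynomial.degree_eq_natDegree hq0]
      exact_mod_cast lt_of_le_of_ne hqnd hne
    exact hq0 (ggr_deglt_zero hab this h)
  -- qt = C c * q with c = qt(b)/q(b)
  set c : ℝ := qt.eval b / q.eval b with hc
  have hs : qt - C c * q = 0 := by
    refine ggr_ker_b hab (k := k) ?_ ?_ ?_
    · refine le_trans (Polynomial.degree_sub_le _ _) (max_le hdt ?_)
      calc (C c * q).degree ≤ (C c).degree + q.degree := Polynomial.degree_mul_le _ _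
        _ ≤ 0 + (k : ℕ) := add_le_add Polynomial.degree_C_le hd
        _ = (k : ℕ) := zero_add _
    · intro w hw
      have h1 := ht w hw
      have h2 := h w hw
      have : (∫ y in a..b, (qt - C c * q).eval y * w.eval y)
          = (∫ y in a..b, qt.eval y * w.eval y) - c * ∫ y in a..b, q.eval y * w.eval y := by
        rw [← intervalIntegral.integral_const_mul, ← intervalIntegral.integral_sub]
        · congr 1; funext y; simp only [Polynomial.eval_sub, Polynomial.eval_mul,
            Polynomial.eval_C]; ring
        · exact ((qt.continuous).mul (w.continuous)).intervalIntegrable a b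
        · exact (continuous_const.mul ((q.continuous).mul (w.continuous))).intervalIntegrable a b
      rw [this, h1, h2, mul_zero, sub_zero]
    · simp only [Polynomial.eval_sub, Polynomial.eval_mul, Polynomial.eval_C, hc]
      field_simp
      ring
  have hqteq : qt = C c * q := by linear_combination (norm := ring_nf) hs
  -- leading coefficient comparison gives c = (-1)^k
  have hlc1 : qt.leadingCoeff = q.leadingCoeff * (-1 : ℝ) ^ k := by
    rw [hqt, Polynomial.leadingCoeff_comp (by rw [hLnd]; exact one_ne_zero), hLlc, hdeg]
  have hlc2 : qt.leadingCoeff = c * q.leadingCoeff := by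
    rw [hqteq, Polynomial.leadingCoeff_mul, Polynomial.leadingCoeff_C]
  have hclc : c = (-1 : ℝ) ^ k := by
    have hql : q.leadingCoeff ≠ 0 := Polynomial.leadingCoeff_ne_zero.mpr hq0
    have h3 : q.leadingCoeff * (-1 : ℝ) ^ k = c * q.leadingCoeff := hlc1.symm.trans hlc2
    have h4 : (-1 : ℝ) ^ k * q.leadingCoeff = c * q.leadingCoeff := by rw [mul_comm]; exact h3
    exact (mul_right_cancel₀ hql h4).symm
  have : q.eval a = qt.eval b := by rw [hqtev]; norm_num
  rw [this, hqteq]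
  simp [hclc]

/-- The cyclic system `θ|e_j| = (1-θ)|e_{j+1}|` forces `e = 0` when `θ ≠ 1/2`. -/
lemma ggr_cyclic {N : ℕ} [NeZero N] {θ : ℝ} (hθ0 : 0 ≤ θ) (hθ1 : θ ≤ 1) (hθ : θ ≠ 1 / 2)
    (e : Fin N → ℝ) (h : ∀ j, θ * |e j| = (1 - θ) * |e (j + 1)|) : ∀ j, e j = 0 := by
  haveI : Nonempty (Fin N) := ⟨0⟩
  obtain ⟨j0, hj0⟩ := Finite.exists_max fun j => |e j|
  have hm0 : |e j0| = 0 := by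
    rcases lt_or_gt_of_ne hθ with hlt | hgt
    · have h1 := h (j0 - 1)
      have h2 : (j0 - 1) + 1 = j0 := sub_add_cancel j0 1
      rw [h2] at h1
      have h3 := hj0 (j0 - 1)
      nlinarith [abs_nonneg (e j0)]
    · have h1 := h j0
      have h3 := hj0 (j0 + 1)
      nlinarith [abs_nonneg (e j0)]
  intro j
  have := hj0 j
  rw [hm0] at this
  exact abs_eq_zero.mp (le_antisymm this (abs_nonneg _))

/-- The linear map encoding moments and generalized traces. -/
noncomputable def ggrT (N k : ℕ) [NeZero N] (θ : ℝ) (a b : Fin N → ℝ) :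
    (Fin N → Polynomial.degreeLT ℝ (k + 1)) →ₗ[ℝ]
      ((Fin N → Fin k → ℝ) × (Fin N → ℝ)) where
  toFun p :=
    (fun j m => ∫ y in a j..b j, ((p j : Polynomial ℝ).eval y) * y ^ (m : ℕ),
     fun j => θ * (p j : Polynomial ℝ).eval (b j)
       + (1 - θ) * (p (j + 1) : Polynomial ℝ).eval (a (j + 1)))
  map_add' p q := by
    have hcoe : ∀ j : Fin N, ((p + q) j : Polynomial ℝ)
        = (p j : Polynomial ℝ) + (q j : Polynomial ℝ) := fun j => rfl
    refine Prod.ext ?_ ?_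
    · funext j m
      show (∫ y in a j..b j, (((p + q) j : Polynomial ℝ).eval y) * y ^ (m : ℕ))
        = (∫ y in a j..b j, ((p j : Polynomial ℝ).eval y) * y ^ (m : ℕ))
          + ∫ y in a j..b j, ((q j : Polynomial ℝ).eval y) * y ^ (m : ℕ)
      rw [show (fun y => (((p + q) j : Polynomial ℝ).eval y) * y ^ (m : ℕ))
          = fun y => ((p j : Polynomial ℝ).eval y) * y ^ (m : ℕ)
            + ((q j : Polynomial ℝ).eval y) * y ^ (m : ℕ) by
        funext y; rw [hcoe]; simp [add_mul]]
      exact intervalIntegral.integral_add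
        ((((p j : Polynomial ℝ).continuous).mul (continuous_pow _)).intervalIntegrable _ _)
        ((((q j : Polynomial ℝ).continuous).mul (continuous_pow _)).intervalIntegrable _ _)
    · funext j
      show θ * (((p + q) j : Polynomial ℝ).eval (b j))
          + (1 - θ) * (((p + q) (j + 1) : Polynomial ℝ).eval (a (j + 1)))
        = (θ * ((p j : Polynomial ℝ).eval (b j))
            + (1 - θ) * ((p (j + 1) : Polynomial ℝ).eval (a (j + 1))))
          + (θ * ((q j : Polynomial ℝ).eval (b j))
            + (1 - θ) * ((q (j + 1) : Polynomial ℝ).eval (a (j + 1))))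
      rw [hcoe, hcoe]
      simp only [Polynomial.eval_add]
      ring
  map_smul' c p := by
    have hcoe : ∀ j : Fin N, ((c • p) j : Polynomial ℝ)
        = c • (p j : Polynomial ℝ) := fun j => rfl
    refine Prod.ext ?_ ?_
    · funext j m
      show (∫ y in a j..b j, (((c • p) j : Polynomial ℝ).eval y) * y ^ (m : ℕ))
        = c * ∫ y in a j..b j, ((p j : Polynomial ℝ).eval y) * y ^ (m : ℕ)
      rw [show (fun y => (((c • p) j : Polynomial ℝ).eval y) * y ^ (m : ℕ))
          = fun y => c * (((p j : Polynomial ℝ).eval y) * y ^ (m : ℕ)) by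
        funext y; rw [hcoe]; simp [Polynomial.eval_smul, smul_eq_mul]; ring]
      rw [intervalIntegral.integral_const_mul]
    · funext j
      show θ * (((c • p) j : Polynomial ℝ).eval (b j))
          + (1 - θ) * (((c • p) (j + 1) : Polynomial ℝ).eval (a (j + 1)))
        = c * (θ * ((p j : Polynomial ℝ).eval (b j))
            + (1 - θ) * ((p (j + 1) : Polynomial ℝ).eval (a (j + 1))))
      rw [hcoe, hcoe]
      simp only [Polynomial.eval_smul, smul_eq_mul]
      ring

noncomputable instance ggr_fd (k : ℕ) : FiniteDimensional ℝ (Polynomial.degreeLT ℝ (k + 1)) :=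
  Module.Finite.equiv (Polynomial.degreeLTEquiv ℝ (k + 1)).symm

lemma ggr_finrank (N k : ℕ) :
    Module.finrank ℝ (Fin N → Polynomial.degreeLT ℝ (k + 1))
      = Module.finrank ℝ ((Fin N → Fin k → ℝ) × (Fin N → ℝ)) := by
  have h1 : Module.finrank ℝ (Polynomial.degreeLT ℝ (k + 1)) = k + 1 := by
    rw [(Polynomial.degreeLTEquiv ℝ (k + 1)).finrank_eq, Module.finrank_pi, Fintype.card_fin]
  rw [Module.finrank_pi_fintype, Module.finrank_prod, Module.finrank_pi_fintype,
    Module.finrank_pi]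
  simp [h1, Module.finrank_pi, Finset.sum_const]
  ring

lemma ggr_deg_le {k : ℕ} {q : Polynomial ℝ} (h : q ∈ Polynomial.degreeLT ℝ (k + 1)) :
    q.degree ≤ (k : ℕ) := by
  have h1 := Polynomial.mem_degreeLT.mp h
  rcases eq_or_ne q 0 with rfl | hq
  · simp
  rw [Polynomial.degree_eq_natDegree hq] at h1 ⊢
  have : q.natDegree < k + 1 := by exact_mod_cast h1
  exact_mod_cast Nat.lt_succ_iff.mp this

end GGRAux

/-- Existence and uniqueness of the generalized Gauss–Radau projection `Pu` into the broken
polynomial space of degree `≤ k` (represented cellwise), for `θ ≠ 1/2`: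
`Pu` is orthogonal on each cell to polynomials of degree `< k` and its generalized trace
`θ·(left value) + (1-θ)·(right value)` matches that of `u` at every (periodically
identified) node. -/
theorem generalized_gauss_radau_projection_exists_unique
    (N k : ℕ) [NeZero N] (θ : ℝ) (hθ0 : 0 ≤ θ) (hθ1 : θ ≤ 1) (hθ : θ ≠ 1 / 2)
    (x : Fin (N + 1) → ℝ) (hx : StrictMono x) (hx0 : x 0 = 0) (hxN : x (Fin.last N) = 1)
    (u : ℝ → ℝ) (hu : Continuous u) (huper : u 0 = u 1) :
    ∃! p : Fin N → Polynomial ℝ,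
      (∀ j : Fin N, (p j).degree ≤ (k : ℕ)) ∧
      (∀ j : Fin N, ∀ w : Polynomial ℝ, w.degree < (k : ℕ) →
        ∫ y in (x j.castSucc)..(x j.succ), ((p j).eval y - u y) * w.eval y = 0) ∧
      (∀ j : Fin N,
        θ * (p j).eval (x j.succ) + (1 - θ) * (p (j + 1)).eval (x (j + 1).castSucc)
          = θ * u (x j.succ) + (1 - θ) * u (x (j + 1).castSucc)) := by
  classical
  have hab : ∀ j : Fin N, x j.castSucc < x j.succ := fun j => hx (Fin.castSucc_lt_succ (i := j))
  set T := ggrT N k θ (fun j => x j.castSucc) (fun j => x j.succ) with hT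
  have hinj : Function.Injective T := by
    rw [← LinearMap.ker_eq_bot, LinearMap.ker_eq_bot']
    intro p hp
    have h1 : ∀ (j : Fin N) (m : Fin k),
        (∫ y in (x j.castSucc)..(x j.succ), ((p j : Polynomial ℝ).eval y) * y ^ (m : ℕ)) = 0 :=
      fun j m => congrFun (congrFun (congrArg Prod.fst hp) j) m
    have h2 : ∀ j : Fin N, θ * (p j : Polynomial ℝ).eval (x j.succ)
        + (1 - θ) * (p (j + 1) : Polynomial ℝ).eval (x (j + 1).castSucc) = 0 :=
      fun j => congrFun (congrArg Prod.snd hp) j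
    have hdeg : ∀ j, (p j : Polynomial ℝ).degree ≤ (k : ℕ) := fun j => ggr_deg_le (p j).2
    have hmom : ∀ j, ∀ w : Polynomial ℝ, w.degree < (k : ℕ) →
        ∫ y in (x j.castSucc)..(x j.succ), ((p j : Polynomial ℝ).eval y) * w.eval y = 0 :=
      fun j => ggr_momspan ((p j : Polynomial ℝ).continuous) (fun i hi => h1 j ⟨i, hi⟩)
    set e : Fin N → ℝ := fun j => (p j : Polynomial ℝ).eval (x j.succ) with he
    have habs : ∀ j, θ * |e j| = (1 - θ) * |e (j + 1)| := by
      intro j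
      have hrefl := ggr_ker_refl (hab (j + 1)) (hdeg (j + 1)) (hmom (j + 1))
      have h3 : θ * e j = -((1 - θ) * ((-1 : ℝ) ^ k * e (j + 1))) := by
        have h4 := h2 j
        rw [hrefl] at h4
        simp only [he]
        linarith
      have h4 : |θ * e j| = |(1 - θ) * ((-1 : ℝ) ^ k * e (j + 1))| := by rw [h3, abs_neg]
      rw [abs_mul, abs_mul, abs_mul, abs_of_nonneg hθ0,
        abs_of_nonneg (by linarith : (0 : ℝ) ≤ 1 - θ), abs_pow, abs_neg, abs_one, one_pow,
        one_mul] at h4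
      exact h4
    have hez := ggr_cyclic hθ0 hθ1 hθ e habs
    funext j
    exact Subtype.ext (ggr_ker_b (hab j) (hdeg j) (hmom j) (hez j))
  have hsurj :=
    (LinearMap.injective_iff_surjective_of_finrank_eq_finrank (ggr_finrank N k)).mp hinj
  obtain ⟨p, hp⟩ := hsurj
    (fun (j : Fin N) (m : Fin k) => ∫ y in (x j.castSucc)..(x j.succ), u y * y ^ (m : ℕ),
     fun (j : Fin N) => θ * u (x j.succ) + (1 - θ) * u (x (j + 1).castSucc))
  refine ⟨fun j => (p j : Polynomial ℝ), ⟨fun j => ggr_deg_le (p j).2, ?_, ?_⟩, ?_⟩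
  · intro j w hw
    refine ggr_momspan (((p j : Polynomial ℝ).continuous).sub hu) ?_ w hw
    intro i hi
    have hint1 : (∫ y in (x j.castSucc)..(x j.succ), ((p j : Polynomial ℝ).eval y) * y ^ i)
        = ∫ y in (x j.castSucc)..(x j.succ), u y * y ^ i :=
      congrFun (congrFun (congrArg Prod.fst hp) j) ⟨i, hi⟩
    have hsplit : (fun y => ((p j : Polynomial ℝ).eval y - u y) * y ^ i)
        = fun y => ((p j : Polynomial ℝ).eval y) * y ^ i - u y * y ^ i := by
      funext y; ring
    show (∫ y in (x j.castSucc)..(x j.succ), ((p j : Polynomial ℝ).eval y - u y) * y ^ i) = 0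
    rw [hsplit, intervalIntegral.integral_sub (f := fun y => ((p j : Polynomial ℝ).eval y) * y ^ i)
      (g := fun y => u y * y ^ i)
      ((((p j : Polynomial ℝ).continuous).mul (continuous_pow i)).intervalIntegrable _ _)
      ((hu.mul (continuous_pow i)).intervalIntegrable _ _), hint1, sub_self]
  · intro j
    exact congrFun (congrArg Prod.snd hp) j
  · rintro p' ⟨hd', hm', ht'⟩
    have hmem : ∀ j, p' j ∈ Polynomial.degreeLT ℝ (k + 1) := fun j =>
      Polynomial.mem_degreeLT.mpr
        (lt_of_le_of_lt (hd' j) (by exact_mod_cast Nat.lt_succ_self k))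
    have hTP : T (fun j => (⟨p' j, hmem j⟩ : Polynomial.degreeLT ℝ (k + 1)))
        = (fun (j : Fin N) (m : Fin k) => ∫ y in (x j.castSucc)..(x j.succ), u y * y ^ (m : ℕ),
           fun (j : Fin N) => θ * u (x j.succ) + (1 - θ) * u (x (j + 1).castSucc)) := by
      refine Prod.ext ?_ ?_
      · funext j m
        show (∫ y in (x j.castSucc)..(x j.succ), ((p' j).eval y) * y ^ (m : ℕ))
          = ∫ y in (x j.castSucc)..(x j.succ), u y * y ^ (m : ℕ)
        have h5 := hm' j (X ^ (m : ℕ))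
          (by rw [Polynomial.degree_X_pow]; exact_mod_cast m.2)
        simp only [Polynomial.eval_pow, Polynomial.eval_X] at h5
        have hsplit : (fun y => ((p' j).eval y - u y) * y ^ (m : ℕ))
            = fun y => ((p' j).eval y) * y ^ (m : ℕ) - u y * y ^ (m : ℕ) := by
          funext y; ring
        rw [hsplit, intervalIntegral.integral_sub (f := fun y => ((p' j).eval y) * y ^ (m : ℕ))
          (g := fun y => u y * y ^ (m : ℕ))
          (((p' j).continuous.mul (continuous_pow _)).intervalIntegrable _ _)
          ((hu.mul (continuous_pow _)).intervalIntegrable _ _)] at h5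
        linarith
      · funext j
        exact ht' j
    have hPp := hinj (hTP.trans hp.symm)
    funext j
    exact congrArg Subtype.val (congrFun hPp j)
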